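/- Let μ be a probability measure on ℝⁿ, and let f, f̂ : ℝⁿ → ℝ be differentiable with gradients ∇f, ∇f̂ square-integrable with respect to μ. Suppose there are constants ω_h ≥ 0 and γ_f ≥ 0 such that for μ-almost every x, ‖∇f̂(x) − ∇f(x)‖ ≤ ω_h and ‖∇f(x)‖ ≤ γ_f (where ‖·‖ is the Euclidean norm). Define the covariance matrices C = ∫ ∇f(x)∇f(x)ᵀ dμ(x) and Ĉ = ∫ ∇f̂(x)∇f̂(x)ᵀ dμ(x). Then, in the operator norm induced by the Euclidean norm, ‖C − Ĉ‖ ≤ (ω_h + 2γ_f) ω_h. -/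

import Mathlib

open MeasureTheory Matrix
open scoped RealInnerProductSpace

lemma int_mul' {α : Type*} [MeasurableSpace α] {μ : Measure α} {F G : α → ℝ}
    (hF : MemLp F 2 μ) (hG : MemLp G 2 μ) : Integrable (fun x => F x * G x) μ := by
  rw [← memLp_one_iff_integrable]
  exact (hG.smul (φ := F) hF
    (hpqr := ⟨by rw [ENNReal.inv_two_add_inv_two, inv_one]⟩) : MemLp (F • G) 1 μ)

/-- If `‖∇f̂(x) − ∇f(x)‖ ≤ ω_h` and `‖∇f(x)‖ ≤ γ_f` for μ-almost every `x`, then the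
gradient covariance matrices `C = ∫ ∇f ∇fᵀ dμ` and `Ĉ = ∫ ∇f̂ ∇f̂ᵀ dμ` satisfy
`‖C − Ĉ‖ ≤ (ω_h + 2γ_f) ω_h` in the operator norm induced by the Euclidean norm. -/
theorem covariance_matrix_error_bound {n : ℕ}
    (μ : Measure (EuclideanSpace ℝ (Fin n))) [IsProbabilityMeasure μ]
    (f fhat : EuclideanSpace ℝ (Fin n) → ℝ)
    (gradF gradFhat : EuclideanSpace ℝ (Fin n) → EuclideanSpace ℝ (Fin n))
    (hf : ∀ x, HasGradientAt f (gradF x) x)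
    (hfhat : ∀ x, HasGradientAt fhat (gradFhat x) x)
    (hL2 : MemLp gradF 2 μ) (hL2hat : MemLp gradFhat 2 μ)
    (ωh γf : ℝ) (hω : 0 ≤ ωh) (hγ : 0 ≤ γf)
    (hbound : ∀ᵐ x ∂μ, ‖gradFhat x - gradF x‖ ≤ ωh)
    (hgradbound : ∀ᵐ x ∂μ, ‖gradF x‖ ≤ γf)
    (C Chat : Matrix (Fin n) (Fin n) ℝ)
    (hC : ∀ i j, C i j = ∫ x, gradF x i * gradF x j ∂μ)
    (hChat : ∀ i j, Chat i j = ∫ x, gradFhat x i * gradFhat x j ∂μ) :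
    ‖Matrix.toEuclideanCLM (𝕜 := ℝ) (C - Chat)‖ ≤ (ωh + 2 * γf) * ωh := by
  set K : ℝ := (ωh + 2 * γf) * ωh with hK
  have hK0 : 0 ≤ K := mul_nonneg (by linarith) hω
  -- component MemLp
  have hgi : ∀ i, MemLp (fun x => gradF x i) 2 μ := fun i =>
    (EuclideanSpace.proj i : EuclideanSpace ℝ (Fin n) →L[ℝ] ℝ).comp_memLp' hL2
  have hgi' : ∀ i, MemLp (fun x => gradFhat x i) 2 μ := fun i =>
    (EuclideanSpace.proj i : EuclideanSpace ℝ (Fin n) →L[ℝ] ℝ).comp_memLp' hL2hat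
  -- key identity
  have key : ∀ u v : EuclideanSpace ℝ (Fin n),
      ⟪u, Matrix.toEuclideanCLM (𝕜 := ℝ) (C - Chat) v⟫ =
      ∫ x, (⟪gradF x, u⟫ * ⟪gradF x, v⟫ - ⟪gradFhat x, u⟫ * ⟪gradFhat x, v⟫) ∂μ := by
    intro u v
    have appA : ∀ (M : Matrix (Fin n) (Fin n) ℝ) (i : Fin n),
        (Matrix.toEuclideanCLM (𝕜 := ℝ) M v) i = ∑ j, M i j * v j := by
      intro M i
      have := congrFun (ofLp_toEuclideanCLM M v) i
      simpa [Matrix.toLin'_apply, Matrix.mulVec, dotProduct] using this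
    have lhs_eq : ⟪u, Matrix.toEuclideanCLM (𝕜 := ℝ) (C - Chat) v⟫
        = ∑ i, ∑ j, u i * v j * (C i j - Chat i j) := by
      simp only [PiLp.inner_apply, RCLike.inner_apply, starRingEnd_apply, star_trivial, appA (C - Chat),
        Matrix.sub_apply, Finset.mul_sum, Finset.sum_mul]
      refine Finset.sum_congr rfl fun i _ => Finset.sum_congr rfl fun j _ => by ring
    rw [lhs_eq]
    have intF : ∀ i j : Fin n, Integrable (fun x => gradF x i * gradF x j) μ :=
      fun i j => int_mul' (hgi i) (hgi j)
    have intFh : ∀ i j : Fin n, Integrable (fun x => gradFhat x i * gradFhat x j) μ :=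
      fun i j => int_mul' (hgi' i) (hgi' j)
    have step : ∀ i j : Fin n, u i * v j * (C i j - Chat i j)
        = ∫ x, u i * v j * (gradF x i * gradF x j - gradFhat x i * gradFhat x j) ∂μ := by
      intro i j
      rw [hC, hChat, ← integral_sub (intF i j) (intFh i j), ← integral_const_mul]
    have rhs_eq : ∫ x, (⟪gradF x, u⟫ * ⟪gradF x, v⟫ - ⟪gradFhat x, u⟫ * ⟪gradFhat x, v⟫) ∂μ
        = ∑ i, ∑ j, ∫ x, u i * v j *
            (gradF x i * gradF x j - gradFhat x i * gradFhat x j) ∂μ := by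
      calc ∫ x, (⟪gradF x, u⟫ * ⟪gradF x, v⟫ - ⟪gradFhat x, u⟫ * ⟪gradFhat x, v⟫) ∂μ
          = ∫ x, ∑ i, ∑ j, u i * v j *
              (gradF x i * gradF x j - gradFhat x i * gradFhat x j) ∂μ := by
            congr 1; ext x
            simp only [PiLp.inner_apply, RCLike.inner_apply, starRingEnd_apply, star_trivial,
              Finset.sum_mul_sum]
            rw [← Finset.sum_sub_distrib]
            refine Finset.sum_congr rfl fun i _ => ?_
            rw [← Finset.sum_sub_distrib]
            refine Finset.sum_congr rfl fun j _ => by ring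
        _ = ∑ i, ∫ x, ∑ j, u i * v j *
              (gradF x i * gradF x j - gradFhat x i * gradFhat x j) ∂μ := by
            refine integral_finset_sum _ fun i _ => ?_
            exact integrable_finset_sum _ fun j _ =>
              (((intF i j).sub (intFh i j)).const_mul _)
        _ = ∑ i, ∑ j, ∫ x, u i * v j *
              (gradF x i * gradF x j - gradFhat x i * gradFhat x j) ∂μ := by
            refine Finset.sum_congr rfl fun i _ => ?_
            exact integral_finset_sum _ fun j _ =>
              (((intF i j).sub (intFh i j)).const_mul _)
    rw [rhs_eq]
    exact Finset.sum_congr rfl fun i _ => Finset.sum_congr rfl fun j _ => step i j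
  -- pointwise a.e. bound for the integrand
  have ptbound : ∀ u v : EuclideanSpace ℝ (Fin n), ∀ᵐ x ∂μ,
      ‖⟪gradF x, u⟫ * ⟪gradF x, v⟫ - ⟪gradFhat x, u⟫ * ⟪gradFhat x, v⟫‖ ≤ K * ‖u‖ * ‖v‖ := by
    intro u v
    filter_upwards [hbound, hgradbound] with x h1 h2
    set g := gradF x; set gh := gradFhat x
    have hgh : ‖gh‖ ≤ γf + ωh :=
      (norm_le_norm_add_norm_sub' gh g).trans (add_le_add h2 h1)
    have expand : ⟪g, u⟫ * ⟪g, v⟫ - ⟪gh, u⟫ * ⟪gh, v⟫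
        = -(⟪gh - g, u⟫ * ⟪gh, v⟫ + ⟪g, u⟫ * ⟪gh - g, v⟫) := by
      simp only [inner_sub_left, inner_sub_right]; ring
    rw [expand, norm_neg]
    have b1 : |⟪gh - g, u⟫| ≤ ωh * ‖u‖ :=
      (abs_real_inner_le_norm _ _).trans (mul_le_mul_of_nonneg_right h1 (norm_nonneg _))
    have b2 : |⟪gh, v⟫| ≤ (γf + ωh) * ‖v‖ :=
      (abs_real_inner_le_norm _ _).trans (mul_le_mul_of_nonneg_right hgh (norm_nonneg _))
    have b3 : |⟪g, u⟫| ≤ γf * ‖u‖ :=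
      (abs_real_inner_le_norm _ _).trans (mul_le_mul_of_nonneg_right h2 (norm_nonneg _))
    have b4 : |⟪gh - g, v⟫| ≤ ωh * ‖v‖ :=
      (abs_real_inner_le_norm _ _).trans (mul_le_mul_of_nonneg_right h1 (norm_nonneg _))
    have hnu : (0:ℝ) ≤ ‖u‖ := norm_nonneg _
    have hnv : (0:ℝ) ≤ ‖v‖ := norm_nonneg _
    calc ‖⟪gh - g, u⟫ * ⟪gh, v⟫ + ⟪g, u⟫ * ⟪gh - g, v⟫‖
        ≤ |⟪gh - g, u⟫| * |⟪gh, v⟫| + |⟪g, u⟫| * |⟪gh - g, v⟫| := by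
          rw [Real.norm_eq_abs]
          exact (abs_add_le _ _).trans (by rw [abs_mul, abs_mul])
      _ ≤ (ωh * ‖u‖) * ((γf + ωh) * ‖v‖) + (γf * ‖u‖) * (ωh * ‖v‖) := by
          gcongr <;> positivity
      _ = K * ‖u‖ * ‖v‖ := by rw [hK]; ring
  -- inner-product bound
  have ibound : ∀ u v : EuclideanSpace ℝ (Fin n),
      ⟪u, Matrix.toEuclideanCLM (𝕜 := ℝ) (C - Chat) v⟫ ≤ K * ‖u‖ * ‖v‖ := by
    intro u v
    rw [key u v]
    calc ∫ x, (⟪gradF x, u⟫ * ⟪gradF x, v⟫ - ⟪gradFhat x, u⟫ * ⟪gradFhat x, v⟫) ∂μ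
        ≤ ‖∫ x, (⟪gradF x, u⟫ * ⟪gradF x, v⟫ - ⟪gradFhat x, u⟫ * ⟪gradFhat x, v⟫) ∂μ‖ :=
          le_abs_self _
      _ ≤ K * ‖u‖ * ‖v‖ := by
          have := norm_integral_le_of_norm_le_const (μ := μ) (C := K * ‖u‖ * ‖v‖)
            (ptbound u v)
          simpa using this
  -- conclude
  refine ContinuousLinearMap.opNorm_le_bound _ hK0 fun v => ?_
  set w := Matrix.toEuclideanCLM (𝕜 := ℝ) (C - Chat) v with hw
  rcases eq_or_lt_of_le (norm_nonneg w) with h0 | h0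
  · rw [← h0]; positivity
  · have h := ibound w v
    rw [real_inner_self_eq_norm_mul_norm] at h
    have := (mul_le_mul_iff_of_pos_right h0).mp (by linarith [h] : ‖w‖ * ‖w‖ ≤ (K * ‖v‖) * ‖w‖)
    linarith
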